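/- For every subgroup P of Γ of order p, the normalizer of P in Γ equals P; in other words, the Weyl group N_Γ(P)/P is trivial. -/

import Mathlib

open Multiplicative

/-- The action of `GL n ℤ` on `ℤⁿ`, as a homomorphism
`Multiplicative (ZMod p) →* MulAut (Multiplicative (Fin n → ℤ))`. -/
def matAutHom {p n : ℕ} (ρ : Multiplicative (ZMod p) →* Matrix.GeneralLinearGroup (Fin n) ℤ) :
    Multiplicative (ZMod p) →* MulAut (Multiplicative (Fin n → ℤ)) where
  toFun g :=
    { toFun := fun v => Multiplicative.ofAdd ((ρ g : Matrix (Fin n) (Fin n) ℤ).mulVec v.toAdd)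
      invFun := fun v =>
        Multiplicative.ofAdd ((((ρ g)⁻¹ : Matrix.GeneralLinearGroup (Fin n) ℤ) :
          Matrix (Fin n) (Fin n) ℤ).mulVec v.toAdd)
      left_inv := fun v => by simp [Matrix.mulVec_mulVec]
      right_inv := fun v => by simp [Matrix.mulVec_mulVec]
      map_mul' := fun u v => by simp [Matrix.mulVec_add] }
  map_one' := by ext v; simp
  map_mul' g h := by ext v; simp [Matrix.mulVec_mulVec]

/-- The group `Γ = ℤⁿ ⋊_ρ ℤ/p`. -/
abbrev Gamma {p n : ℕ} (ρ : Multiplicative (ZMod p) →* Matrix.GeneralLinearGroup (Fin n) ℤ) :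
    Type :=
  SemidirectProduct (Multiplicative (Fin n → ℤ)) (Multiplicative (ZMod p)) (matAutHom ρ)

lemma matAutHom_apply {p n : ℕ} (ρ : Multiplicative (ZMod p) →* Matrix.GeneralLinearGroup (Fin n) ℤ)
    (g : Multiplicative (ZMod p)) (v : Multiplicative (Fin n → ℤ)) :
    matAutHom ρ g v = Multiplicative.ofAdd ((ρ g : Matrix (Fin n) (Fin n) ℤ).mulVec v.toAdd) :=
  rfl

/-- For every subgroup `P` of `Γ = ℤⁿ ⋊_ρ ℤ/p` of order `p`, the normalizer of `P` in `Γ`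
equals `P`; i.e. the Weyl group `N_Γ(P)/P` is trivial. -/
theorem normalizer_eq_self_of_card_p (p n : ℕ) (hp : p.Prime) (hodd : Odd p) (hn : 0 < n)
    (ρ : Multiplicative (ZMod p) →* Matrix.GeneralLinearGroup (Fin n) ℤ)
    (hfree : ∀ g : Multiplicative (ZMod p), g ≠ 1 → ∀ v : Fin n → ℤ,
      (ρ g : Matrix (Fin n) (Fin n) ℤ).mulVec v = v → v = 0)
    (P : Subgroup (Gamma ρ)) (hP : Nat.card P = p) :
    Subgroup.normalizer (P : Set (Gamma ρ)) = P := by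
  have hpf : Fact p.Prime := ⟨hp⟩
  have hnz : NeZero p := ⟨hp.ne_zero⟩
  -- get a generator x of P, of order p
  obtain ⟨⟨x, hxP⟩, hgen⟩ := isCyclic_of_prime_card (α := P) hP
  have hordP : orderOf (⟨x, hxP⟩ : P) = p := by
    rw [orderOf_eq_card_of_forall_mem_zpowers hgen, hP]
  have hord : orderOf x = p :=
    (orderOf_injective P.subtype Subtype.coe_injective ⟨x, hxP⟩).trans hordP
  have hPz : P = Subgroup.zpowers x := by
    refine le_antisymm (fun q hq => ?_) ((Subgroup.zpowers_le).mpr hxP)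
    obtain ⟨k, hk⟩ := hgen ⟨q, hq⟩
    exact ⟨k, congrArg Subtype.val hk⟩
  have hxp1 : x ^ p = 1 := by
    have h := pow_orderOf_eq_one x
    rwa [hord] at h
  -- x.right ≠ 1
  have hxr : x.right ≠ 1 := by
    intro h1
    have hx1 : x = SemidirectProduct.inl x.left := by
      ext
      · rfl
      · simpa using h1
    have hxpl : SemidirectProduct.inl (x.left ^ p) = (1 : Gamma ρ) := by
      rw [map_pow, ← hx1, hxp1]
    have hl1 : x.left ^ p = 1 := by
      have := SemidirectProduct.inl_injective (φ := matAutHom ρ)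
        (by rw [hxpl, map_one] : SemidirectProduct.inl (x.left ^ p) =
          SemidirectProduct.inl (1 : Multiplicative (Fin n → ℤ)))
      exact this
    have hl0 : Multiplicative.toAdd x.left = 0 := by
      have h2 : p • Multiplicative.toAdd x.left = 0 := by
        have := congrArg Multiplicative.toAdd hl1
        simpa using this
      funext i
      have := congrFun h2 i
      simp only [Pi.smul_apply, smul_eq_mul, Pi.zero_apply] at this
      exact by
        have hpne : (p : ℤ) ≠ 0 := by exact_mod_cast hp.ne_zero
        exact (mul_eq_zero.mp (by exact_mod_cast this)).resolve_left hpne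
    have hx : x = 1 := by
      ext
      · simpa using congrFun hl0 _
      · simpa using h1
    rw [hx, orderOf_one] at hord
    exact hp.one_lt.ne' hord.symm
  have hxrp : x.right ^ p = 1 := by
    have := congrArg SemidirectProduct.rightHom hxp1
    simpa [map_pow] using this
  have hordr : orderOf x.right = p := orderOf_eq_prime hxrp hxr
  -- normalizer ≤ P
  refine le_antisymm (fun y hy => ?_) P.le_normalizer
  have hyx : y * x * y⁻¹ ∈ P := (Subgroup.mem_normalizer_iff.mp hy x).mp hxP
  rw [hPz] at hyx
  obtain ⟨k, hk⟩ := Subgroup.mem_zpowers_iff.mp hyx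
  -- project to the right factor : x.right ^ k = x.right
  have hgk : x.right ^ k = x.right := by
    have h1 := congrArg SemidirectProduct.rightHom hk
    simp only [map_zpow, map_mul, map_inv, SemidirectProduct.rightHom_eq_right] at h1
    rw [mul_comm (SemidirectProduct.right y), mul_assoc, mul_inv_cancel, mul_one] at h1
    exact h1
  have hdvd : (p : ℤ) ∣ k - 1 := by
    rw [← hordr]
    rw [orderOf_dvd_iff_zpow_eq_one, zpow_sub, hgk, zpow_one, mul_inv_cancel]
  -- hence y * x * y⁻¹ = x, i.e. y commutes with x
  have hxk : x ^ k = x := by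
    have h1 : x ^ (k - 1) = 1 := by
      rw [← orderOf_dvd_iff_zpow_eq_one, hord]
      exact hdvd
    calc x ^ k = x ^ (k - 1) * x := by rw [← zpow_add_one, sub_add_cancel]
    _ = x := by rw [h1, one_mul]
  have hcomm : y * x = x * y := mul_inv_eq_iff_eq_mul.mp (hk.symm.trans hxk ▸ (hk.symm.trans hxk))
  -- write y.right = x.right ^ m
  have hmem : y.right ∈ Subgroup.zpowers x.right := by
    have hcard : Nat.card (Multiplicative (ZMod p)) = p := by
      simp [Nat.card_eq_fintype_card, ZMod.card]
    exact mem_zpowers_of_prime_card (p := p) hcard hxr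
  obtain ⟨m, hm⟩ := hmem
  -- z = y * x⁻ᵐ has trivial right component and commutes with x
  set z := y * x ^ (-m) with hzdef
  have hzr : z.right = 1 := by
    have hr : (x ^ (-m)).right = x.right ^ (-m) := by
      have h := map_zpow (SemidirectProduct.rightHom (φ := matAutHom ρ)) x (-m)
      simpa [SemidirectProduct.rightHom_eq_right] using h
    have hm' : x.right ^ m = y.right := hm
    rw [hzdef, SemidirectProduct.mul_right, hr, ← hm', ← zpow_add, add_neg_cancel, zpow_zero]
  have hzcomm : z * x = x * z := by
    rw [hzdef]
    calc y * x ^ (-m) * x = y * (x * x ^ (-m)) := by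
          rw [mul_assoc, ← zpow_one_add, ← zpow_add_one]; ring_nf
    _ = y * x * x ^ (-m) := by rw [mul_assoc]
    _ = x * (y * x ^ (-m)) := by rw [hcomm, mul_assoc]
  -- z must be trivial
  have hzl : z.left = 1 := by
    have h1 := congrArg SemidirectProduct.left hzcomm
    rw [SemidirectProduct.mul_left, SemidirectProduct.mul_left, hzr, map_one] at h1
    simp only [MulAut.one_apply] at h1
    rw [mul_comm] at h1
    have h2 : z.left = matAutHom ρ x.right z.left := mul_left_cancel h1
    rw [matAutHom_apply] at h2
    have h3 : (ρ x.right : Matrix (Fin n) (Fin n) ℤ).mulVec (Multiplicative.toAdd z.left)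
        = Multiplicative.toAdd z.left := by
      have := congrArg Multiplicative.toAdd h2
      simpa using this.symm
    have := hfree x.right hxr _ h3
    have : Multiplicative.toAdd z.left = 0 := this
    simpa using congrArg Multiplicative.ofAdd this
  have hz1 : z = 1 := by
    ext
    · simpa using congrFun (congrArg Multiplicative.toAdd hzl) _
    · simpa using hzr
  have hyxm : y = x ^ m := by
    have h : y * x ^ (-m) = 1 := by rw [← hzdef]; exact hz1
    rw [zpow_neg] at h
    exact (mul_inv_eq_one.mp h)
  rw [hPz, hyxm]
  exact Subgroup.zpow_mem _ (Subgroup.mem_zpowers x) m
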